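/- Let 𝐢 = (i_1,…,i_N) be a reduced word for the reversal w₀ in S_{n+1} with induced root sequence β_1, …, β_N. Then for each position k: i_{k+2} = i_k and |i_k − i_{k+1}| = 1 (so that replacing (i_k, i_{k+1}, i_k) by (i_{k+1}, i_k, i_{k+1}) is a 3-term braid move yielding another reduced word 𝐢′ for w₀) if and only if β_{k+1} = β_k + β_{k+2}. Moreover, in this case the induced root sequence of 𝐢′ has β_{k+2}, β_{k+1}, β_k in positions k, k+1, k+2 respectively, all other terms being unchanged. -/

import Mathlib

open scoped Classical

noncomputable section

/-- Standard basis vector `e i` (1-based coordinates, ambient `ℤ^(n+1)` sits inside `ℕ → ℤ`). -/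
def stdE (i : ℕ) : ℕ → ℤ := fun j => if j = i then 1 else 0

/-- Type `A_n` simple root `α_i = e_i - e_(i+1)`. -/
def alphaA (i : ℕ) : ℕ → ℤ := stdE i - stdE (i+1)

/-- Positive root `α_(i,j) = α_i + ⋯ + α_j = e_i - e_(j+1)`. -/
def rootA (i j : ℕ) : ℕ → ℤ := stdE i - stdE (j+1)

/-- `β` is a positive root of type `A_n`. -/
def PosRootA (n : ℕ) (β : ℕ → ℤ) : Prop :=
  ∃ i j, 1 ≤ i ∧ i ≤ j ∧ j ≤ n ∧ β = rootA i j

/-- Simple transposition `s_i = (i, i+1)`. -/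
def sA (i : ℕ) : Equiv.Perm ℕ := Equiv.swap i (i+1)

/-- Product `s_(i₁) ⋯ s_(i_N)` of the simple transpositions of a word. -/
def wordProdA (w : List ℕ) : Equiv.Perm ℕ := (w.map sA).prod

/-- The reversal permutation `w₀ : k ↦ n+2-k` of `{1,…,n+1}`. -/
def w0A (n : ℕ) : Equiv.Perm ℕ :=
  Function.Involutive.toPerm (fun k => if 1 ≤ k ∧ k ≤ n+1 then n+2-k else k)
    (by intro k; dsimp only; split_ifs <;> omega)

/-- A permutation of coordinate indices acts on vectors by permuting coordinates. -/
def permAct (σ : Equiv.Perm ℕ) (v : ℕ → ℤ) : ℕ → ℤ := fun j => v (σ⁻¹ j)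

/-- The induced root sequence `β_k = s_(i₁)⋯s_(i_(k-1)) (α_(i_k))` of a word (0-indexed). -/
def rootSeqA (w : List ℕ) : List (ℕ → ℤ) :=
  (List.range w.length).map fun k => permAct (wordProdA (w.take k)) (alphaA (w.getD k 0))

/-- The word `𝐢^A = (1,2,…,n)(1,2,…,n-1)⋯(1,2)(1)`. -/
def wordA (n : ℕ) : List ℕ :=
  ((List.range n).reverse).flatMap fun m => (List.range (m+1)).map (· + 1)

/-- `w` is a reduced word for the longest element `w₀` of `S_(n+1)`. -/
def isReducedWordA (n : ℕ) (w : List ℕ) : Prop :=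
  (∀ i ∈ w, 1 ≤ i ∧ i ≤ n) ∧ w.length = n * (n+1) / 2 ∧ wordProdA w = w0A n

/-- Standard inner product on `ℤ^(n+1)` (coordinates `1,…,n+1`; index `0` unused). -/
def ipA (n : ℕ) (v u : ℕ → ℤ) : ℤ := ∑ j ∈ Finset.range (n+2), v j * u j


section Helpers

lemma permAct_mul (σ τ : Equiv.Perm ℕ) (v : ℕ → ℤ) :
    permAct (σ * τ) v = permAct σ (permAct τ v) := by
  funext j; simp [permAct, Equiv.Perm.mul_apply]

lemma permAct_add (σ : Equiv.Perm ℕ) (u v : ℕ → ℤ) :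
    permAct σ (u + v) = permAct σ u + permAct σ v := rfl

lemma permAct_inj (σ : Equiv.Perm ℕ) : Function.Injective (permAct σ) := by
  intro u v h
  funext j
  have := congrFun h (σ j)
  simpa [permAct] using this

lemma wordProdA_append (l1 l2 : List ℕ) :
    wordProdA (l1 ++ l2) = wordProdA l1 * wordProdA l2 := by
  simp [wordProdA]

lemma wordProdA_triple (x y z : ℕ) : wordProdA [x, y, z] = sA x * sA y * sA z := by
  simp [wordProdA, mul_assoc]

lemma sA_alpha_self (i : ℕ) : permAct (sA i) (alphaA i) = -alphaA i := by
  funext x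
  simp [permAct, sA, alphaA, stdE, Equiv.swap_apply_def]
  split_ifs <;> omega

lemma sA_alpha_adj (i j : ℕ) (h : i+1 = j ∨ j+1 = i) :
    permAct (sA i) (alphaA j) = alphaA i + alphaA j := by
  funext x
  simp [permAct, sA, alphaA, stdE, Equiv.swap_apply_def]
  split_ifs <;> omega

lemma sA_alpha_far (i j : ℕ) (h1 : i ≠ j) (h2 : i ≠ j+1) (h3 : j ≠ i+1) :
    permAct (sA i) (alphaA j) = alphaA j := by
  funext x
  simp [permAct, sA, alphaA, stdE, Equiv.swap_apply_def]
  split_ifs <;> omega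

lemma alphaA_inj {c d : ℕ} (h : alphaA c = alphaA d) : c = d := by
  have h1 := congrFun h c
  have h2 := congrFun h d
  simp [alphaA, stdE] at h1 h2
  split_ifs at h1 h2 <;> omega

lemma braid_succ (a : ℕ) : sA a * sA (a+1) * sA a = sA (a+1) * sA a * sA (a+1) := by
  have h1 : Equiv.swap (a+1) a * Equiv.swap (a+2) (a+1) * Equiv.swap (a+1) a
      = Equiv.swap a (a+2) :=
    Equiv.swap_mul_swap_mul_swap (by omega) (by omega)
  have h2 : Equiv.swap (a+1) (a+2) * Equiv.swap a (a+1) * Equiv.swap (a+1) (a+2)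
      = Equiv.swap (a+2) a :=
    Equiv.swap_mul_swap_mul_swap (by omega) (by omega)
  rw [Equiv.swap_comm (a+1) a, Equiv.swap_comm (a+2) (a+1)] at h1
  rw [Equiv.swap_comm (a+2) a] at h2
  simp only [sA]
  rw [h1, h2]

lemma braidA (a b : ℕ) (h : a+1 = b ∨ b+1 = a) : sA a * sA b * sA a = sA b * sA a * sA b := by
  rcases h with h | h
  · rw [← h]; exact braid_succ a
  · rw [← h]; exact (braid_succ b).symm

lemma permAct_sA_sA (i : ℕ) (v : ℕ → ℤ) : permAct (sA i) (permAct (sA i) v) = v := by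
  funext x
  simp [permAct, sA]

lemma rootSeqA_length (w : List ℕ) : (rootSeqA w).length = w.length := by
  simp [rootSeqA]

lemma rootSeqA_getElem (w : List ℕ) (m : ℕ) (h : m < (rootSeqA w).length) :
    (rootSeqA w)[m] = permAct (wordProdA (w.take m)) (alphaA (w.getD m 0)) := by
  simp [rootSeqA]

lemma rootSeqA_getD (w : List ℕ) (m : ℕ) (h : m < w.length) :
    (rootSeqA w).getD m 0 = permAct (wordProdA (w.take m)) (alphaA (w.getD m 0)) := by
  rw [List.getD_eq_getElem _ _ (by simpa [rootSeqA_length])]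
  exact rootSeqA_getElem w m (by simpa [rootSeqA_length])

lemma take_succ_getD (w : List ℕ) (m : ℕ) (h : m < w.length) :
    w.take (m+1) = w.take m ++ [w.getD m 0] := by
  rw [List.take_succ, List.getElem?_eq_getElem h, List.getD_eq_getElem _ _ h]
  rfl

lemma prod_take_succ (w : List ℕ) (m : ℕ) (h : m < w.length) :
    wordProdA (w.take (m+1)) = wordProdA (w.take m) * sA (w.getD m 0) := by
  rw [take_succ_getD w m h, wordProdA_append]
  simp [wordProdA]

lemma key_back (a b c : ℕ) (h : permAct (sA b) (alphaA c) = alphaA a + alphaA b) :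
    c = a ∧ (a + 1 = b ∨ b + 1 = a) := by
  have h3 := congrArg (permAct (sA b)) h
  rw [permAct_sA_sA, permAct_add, sA_alpha_self] at h3
  by_cases hab : a + 1 = b ∨ b + 1 = a
  · refine ⟨?_, hab⟩
    rw [sA_alpha_adj b a hab.symm] at h3
    have h4 : alphaA c = alphaA a := by rw [h3]; abel
    exact alphaA_inj h4
  · exfalso
    push_neg at hab
    by_cases heq : a = b
    · subst heq
      rw [sA_alpha_self] at h3
      have := congrFun h3 a
      simp [alphaA, stdE] at this
      split_ifs at this <;> omega
    · rw [sA_alpha_far b a (fun hh => heq hh.symm) (by omega) (by omega)] at h3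
      have ha := congrFun h3 a
      have hb := congrFun h3 b
      simp [alphaA, stdE] at ha hb
      split_ifs at ha hb <;> omega

lemma set3 (t d : List ℕ) (a₁ a₂ a₃ x y z : ℕ) (k : ℕ) (hk : t.length = k) :
    (((t ++ [a₁, a₂, a₃] ++ d).set k x).set (k+1) y).set (k+2) z
      = t ++ [x, y, z] ++ d := by
  subst hk
  simp [List.append_assoc, List.set_append]

end Helpers

/-- For a reduced word `𝐢` for `w₀` with induced root sequence `β`, positions
`k, k+1, k+2` carry letters `(a, b, a)` with `|a - b| = 1` (a 3-term braid move applies) iff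
`β_(k+1) = β_k + β_(k+2)`; in that case the braided word `(b, a, b)` is again a reduced word
for `w₀`, and its induced root sequence has `β_(k+2), β_(k+1), β_k` in positions
`k, k+1, k+2`, all other terms unchanged. -/
theorem statement4 (n : ℕ) (hn : 1 ≤ n) (w : List ℕ) (hw : isReducedWordA n w)
    (k : ℕ) (hk : k + 2 < w.length) :
    ((w.getD (k+2) 0 = w.getD k 0 ∧
        (w.getD k 0 + 1 = w.getD (k+1) 0 ∨ w.getD (k+1) 0 + 1 = w.getD k 0)) ↔
      (rootSeqA w).getD (k+1) 0 = (rootSeqA w).getD k 0 + (rootSeqA w).getD (k+2) 0) ∧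
    ((w.getD (k+2) 0 = w.getD k 0 ∧
        (w.getD k 0 + 1 = w.getD (k+1) 0 ∨ w.getD (k+1) 0 + 1 = w.getD k 0)) →
      isReducedWordA n
        (((w.set k (w.getD (k+1) 0)).set (k+1) (w.getD k 0)).set (k+2) (w.getD (k+1) 0)) ∧
      rootSeqA
          (((w.set k (w.getD (k+1) 0)).set (k+1) (w.getD k 0)).set (k+2) (w.getD (k+1) 0)) =
        ((rootSeqA w).set k ((rootSeqA w).getD (k+2) 0)).set (k+2) ((rootSeqA w).getD k 0)) := by
  obtain ⟨hbound, hlen, hprod⟩ := hw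
  have hk0 : k < w.length := by omega
  have hk1 : k + 1 < w.length := by omega
  set a := w.getD k 0 with ha
  set b := w.getD (k+1) 0 with hb
  set c := w.getD (k+2) 0 with hc
  set t := w.take k with hT
  have ht : t.length = k := by
    simp [hT]; omega
  set P := wordProdA t with hP
  -- root sequence values
  have hβk : (rootSeqA w).getD k 0 = permAct P (alphaA a) := by
    rw [rootSeqA_getD w k hk0, ← ha, ← hT, ← hP]
  have hβk1 : (rootSeqA w).getD (k+1) 0 = permAct P (permAct (sA a) (alphaA b)) := by
    rw [rootSeqA_getD w (k+1) hk1, prod_take_succ w k hk0, permAct_mul, ← ha, ← hb, ← hT, ← hP]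
  have hβk2 : (rootSeqA w).getD (k+2) 0
      = permAct P (permAct (sA a) (permAct (sA b) (alphaA c))) := by
    rw [rootSeqA_getD w (k+2) hk, prod_take_succ w (k+1) hk1, prod_take_succ w k hk0,
      permAct_mul, permAct_mul, ← ha, ← hb, ← hc, ← hT, ← hP]
  constructor
  · constructor
    · rintro ⟨hca, hadj⟩
      rw [hβk, hβk1, hβk2, hca]
      rw [sA_alpha_adj b a hadj.symm, permAct_add, sA_alpha_adj a b hadj, sA_alpha_self,
        ← permAct_add]
      congr 1
      abel
    · intro heq
      rw [hβk, hβk1, hβk2] at heq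
      have h2 : permAct (sA a) (alphaA b)
          = alphaA a + permAct (sA a) (permAct (sA b) (alphaA c)) :=
        permAct_inj P (by rw [heq, permAct_add])
      have h3 := congrArg (permAct (sA a)) h2
      rw [permAct_sA_sA, permAct_add, sA_alpha_self, permAct_sA_sA] at h3
      have h4 : permAct (sA b) (alphaA c) = alphaA a + alphaA b := by
        rw [h3]; abel
      exact key_back a b c h4
  · rintro ⟨hca, hadj⟩
    rw [hca] at hβk2
    set d := w.drop (k+3) with hd
    have e1 : w[k] = a := by rw [ha, List.getD_eq_getElem w 0 hk0]
    have e2 : w[k+1] = b := by rw [hb, List.getD_eq_getElem w 0 hk1]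
    have e3 : w[k+2] = a := by rw [← List.getD_eq_getElem w 0 hk, ← hc, hca]
    have hdec : w = t ++ [a, b, a] ++ d := by
      conv_lhs => rw [← List.take_append_drop k w]
      rw [List.drop_eq_getElem_cons hk0, List.drop_eq_getElem_cons hk1,
        List.drop_eq_getElem_cons hk, e1, e2, e3, ← hT, ← hd]
      simp [List.append_assoc]
    set W := ((w.set k b).set (k+1) a).set (k+2) b with hWdef
    have hdec' : W = t ++ [b, a, b] ++ d := by
      rw [hWdef]
      conv_lhs => rw [hdec]
      exact set3 t d a b a b a b k ht
    have hWlen : W.length = w.length := by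
      rw [hWdef]; simp [List.length_set]
    have hW_take_k : W.take k = t := by
      rw [hdec', List.append_assoc, ← ht]
      exact List.take_left
    have hsub : k - t.length = 0 := by omega
    have hsub1 : k + 1 - t.length = 1 := by omega
    have hsub2 : k + 2 - t.length = 2 := by omega
    have hWk : W.getD k 0 = b := by
      rw [hdec', List.append_assoc, List.getD_append_right _ _ _ _ (by omega), hsub]
      rfl
    have hWk1 : W.getD (k+1) 0 = a := by
      rw [hdec', List.append_assoc, List.getD_append_right _ _ _ _ (by omega), hsub1]
      rfl
    have hWk2 : W.getD (k+2) 0 = b := by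
      rw [hdec', List.append_assoc, List.getD_append_right _ _ _ _ (by omega), hsub2]
      rfl
    have hkW : k < W.length := by omega
    have hk1W : k + 1 < W.length := by omega
    have hQ0 : wordProdA (W.take k) = P := by rw [hW_take_k]
    have hQ1 : wordProdA (W.take (k+1)) = P * sA b := by
      rw [prod_take_succ W k hkW, hQ0, hWk]
    have hQ2 : wordProdA (W.take (k+2)) = P * sA b * sA a := by
      rw [prod_take_succ W (k+1) hk1W, hQ1, hWk1]
    constructor
    · refine ⟨?_, ?_, ?_⟩
      · intro i hi
        rw [hdec'] at hi
        simp only [List.mem_append, List.mem_cons, List.not_mem_nil, or_false] at hi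
        apply hbound
        rcases hi with (hi | hi | hi | hi) | hi
        · exact List.take_subset k w (hT ▸ hi)
        · rw [hi, hb, List.getD_eq_getElem w 0 hk1]; exact List.getElem_mem _
        · rw [hi, ha, List.getD_eq_getElem w 0 hk0]; exact List.getElem_mem _
        · rw [hi, hb, List.getD_eq_getElem w 0 hk1]; exact List.getElem_mem _
        · exact List.drop_subset (k+3) w (hd ▸ hi)
      · rw [hWlen]; exact hlen
      · rw [hdec', wordProdA_append, wordProdA_append, wordProdA_triple,
          ← braidA a b hadj, ← wordProdA_triple, ← wordProdA_append, ← wordProdA_append,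
          ← hdec]
        exact hprod
    · apply List.ext_getElem
      · simp [rootSeqA_length, hWlen]
      · intro m h1 h2
        have hmw : m < w.length := by
          rw [rootSeqA_length, hWlen] at h1; exact h1
        rw [List.getElem_set, List.getElem_set, rootSeqA_getElem W m h1]
        rcases lt_trichotomy m k with hm | hm | hm
        · rw [if_neg (by omega), if_neg (by omega),
            rootSeqA_getElem w m (by rw [rootSeqA_length]; exact hmw)]
          have f1 : W.take m = w.take m := by
            rw [hdec', hdec, List.append_assoc, List.append_assoc,
              List.take_append_of_le_length (by omega), List.take_append_of_le_length (by omega)]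
          have f2 : W.getD m 0 = w.getD m 0 := by
            rw [hdec', hdec, List.append_assoc, List.append_assoc,
              List.getD_append _ _ _ _ (by omega), List.getD_append _ _ _ _ (by omega)]
          rw [f1, f2]
        · subst hm
          rw [if_neg (by omega), if_pos rfl, hQ0, hWk, hβk2,
            sA_alpha_adj b a hadj.symm, permAct_add, sA_alpha_adj a b hadj, sA_alpha_self]
          exact congrArg (permAct P) (by abel)
        · by_cases hm1 : m = k + 1
          · subst hm1
            rw [if_neg (by omega), if_neg (by omega),
              rootSeqA_getElem w (k+1) (by rw [rootSeqA_length]; exact hk1),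
              prod_take_succ w k hk0, ← hT, ← hP, ← ha, ← hb, permAct_mul,
              hQ1, permAct_mul, hWk1,
              sA_alpha_adj a b hadj, sA_alpha_adj b a hadj.symm]
            congr 1
            abel
          · by_cases hm2 : m = k + 2
            · subst hm2
              rw [if_pos rfl, hQ2, hWk2, hβk, permAct_mul, permAct_mul,
                sA_alpha_adj a b hadj, permAct_add, sA_alpha_adj b a hadj.symm, sA_alpha_self]
              exact congrArg (permAct P) (by abel)
            · rw [if_neg (by omega), if_neg (by omega),
                rootSeqA_getElem w m (by rw [rootSeqA_length]; exact hmw)]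
              obtain ⟨j, hj⟩ : ∃ j, m = k + 3 + j := ⟨m - (k+3), by omega⟩
              subst hj
              have hlen3 : (t ++ [a, b, a]).length = k + 3 := by simp [ht]
              have hlen3' : (t ++ [b, a, b]).length = k + 3 := by simp [ht]
              have hidx : ∀ L : List ℕ, L.length = k + 3 →
                  k + 3 + j - L.length = j := by intro L hL; omega
              have f1 : w.take (k+3+j) = (t ++ [a, b, a]) ++ d.take j := by
                conv_lhs => rw [hdec]
                rw [show k + 3 + j = (t ++ [a, b, a]).length + j by omega]
                exact List.take_length_add_append j
              have f1' : W.take (k+3+j) = (t ++ [b, a, b]) ++ d.take j := by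
                conv_lhs => rw [hdec']
                rw [show k + 3 + j = (t ++ [b, a, b]).length + j by omega]
                exact List.take_length_add_append j
              have f2 : w.getD (k+3+j) 0 = d.getD j 0 := by
                conv_lhs => rw [hdec]
                rw [List.getD_append_right _ _ _ _ (by simp [ht]), hidx _ hlen3]
              have f2' : W.getD (k+3+j) 0 = d.getD j 0 := by
                conv_lhs => rw [hdec']
                rw [List.getD_append_right _ _ _ _ (by simp [ht]), hidx _ hlen3']
              rw [f1, f1', f2, f2', wordProdA_append, wordProdA_append,
                wordProdA_append, wordProdA_append, wordProdA_triple, wordProdA_triple,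
                braidA a b hadj]


end
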